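/- The locus of tangency points T(b) = ((b²−1)/Δ, 2b sin γ/Δ), Δ = b² + 2b cos γ + 1, as b ranges over ℝ \ {roots of Δ}, lies on the circle Γ through (−1,0) and (1,0) given implicitly by −sin γ (x² + y² − 1) − 2y cos γ = 0. -/

import Mathlib

open Real

/-- The locus of tangency points `T(b) = ((b²-1)/Δ, 2b sin γ/Δ)`,
`Δ = b² + 2b cos γ + 1 ≠ 0`, lies on the circle `Γ` given by
`-sin γ (x² + y² - 1) - 2y cos γ = 0`. -/
theorem tangency_locus (γ : ℝ) :
    ∀ b : ℝ, b^2 + 2*b*Real.cos γ + 1 ≠ 0 →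
      -Real.sin γ * (((b^2 - 1)/(b^2 + 2*b*Real.cos γ + 1))^2
          + ((2*b*Real.sin γ)/(b^2 + 2*b*Real.cos γ + 1))^2 - 1)
        - 2 * ((2*b*Real.sin γ)/(b^2 + 2*b*Real.cos γ + 1)) * Real.cos γ = 0 := by
  intro b hΔ
  have h := Real.sin_sq_add_cos_sq γ
  have hΔ' : b * (b + 2 * Real.cos γ) + 1 ≠ 0 := by
    contrapose! hΔ; linear_combination hΔ
  field_simp
  linear_combination (-4*b^2*Real.sin γ) * h
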